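/- Let G = Z2^{k1} × Z4^{k2} × Q8^{k3} and let x, y ∈ G with [x, y] = e. Then wt((xy)^2) = wt(x^2) + wt(y^2) − 2·wt((x : y)), where wt(t) denotes the Hamming weight of the Gray image Φ(t) ∈ Z2^{k1+2k2+4k3}. -/

import Mathlib

/-- The group G = Z2^{k1} × Z4^{k2} × Q8^{k3}. -/
abbrev Gq (k1 k2 k3 : ℕ) : Type :=
  (Fin k1 → Multiplicative (ZMod 2)) × (Fin k2 → Multiplicative (ZMod 4)) ×
    (Fin k3 → QuaternionGroup 2)

/-- The Gray map Φ : Q8 → Z2⁴ : 1 ↦ 0000, a ↦ 0101, a² ↦ 1111, a³ ↦ 1010,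
b ↦ 0110, a³b ↦ 0011, a²b ↦ 1001, ab ↦ 1100 (here b = xa 0, so ab = xa 3, etc.). -/
def grayQ8 : QuaternionGroup 2 → Fin 4 → ZMod 2
  | QuaternionGroup.a i =>
      if i = 0 then ![0, 0, 0, 0] else if i = 1 then ![0, 1, 0, 1]
      else if i = 2 then ![1, 1, 1, 1] else ![1, 0, 1, 0]
  | QuaternionGroup.xa i =>
      if i = 0 then ![0, 1, 1, 0] else if i = 1 then ![0, 0, 1, 1]
      else if i = 2 then ![1, 0, 0, 1] else ![1, 1, 0, 0]

/-- The Gray map φ : Z4 → Z2² : 0 ↦ 00, 1 ↦ 01, 2 ↦ 11, 3 ↦ 10. -/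
def grayZ4 : ZMod 4 → Fin 2 → ZMod 2 := fun x =>
  if x = 0 then ![0, 0] else if x = 1 then ![0, 1] else if x = 2 then ![1, 1] else ![1, 0]

/-- The componentwise Gray map on G = Z2^{k1} × Z4^{k2} × Q8^{k3}. -/
def grayG {k1 k2 k3 : ℕ} (x : Gq k1 k2 k3) :
    (Fin k1 → ZMod 2) × (Fin k2 → Fin 2 → ZMod 2) × (Fin k3 → Fin 4 → ZMod 2) :=
  (fun i => Multiplicative.toAdd (x.1 i),
   fun j => grayZ4 (Multiplicative.toAdd (x.2.1 j)),
   fun j => grayQ8 (x.2.2 j))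

/-- Hamming weight of the Gray image of an element of G. -/
def wtG {k1 k2 k3 : ℕ} (x : Gq k1 k2 k3) : ℕ :=
  (Finset.univ.filter fun i => (grayG x).1 i ≠ 0).card
    + ∑ j : Fin k2, (Finset.univ.filter fun b => (grayG x).2.1 j b ≠ 0).card
    + ∑ j : Fin k3, (Finset.univ.filter fun b => (grayG x).2.2 j b ≠ 0).card

/-- The element u of G whose Gray image is the all-ones vector. -/
def uG (k1 k2 k3 : ℕ) : Gq k1 k2 k3 :=
  (fun _ => Multiplicative.ofAdd (1 : ZMod 2),
   fun _ => Multiplicative.ofAdd (2 : ZMod 4),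
   fun _ => QuaternionGroup.a 2)

open scoped commutatorElement

lemma lz2 (a b c : Multiplicative (ZMod 2))
    (h : Multiplicative.toAdd (c*a*b) = Multiplicative.toAdd a + Multiplicative.toAdd b) :
    Multiplicative.toAdd c = (0 : ZMod 2) := by revert h; revert a b c; decide

lemma lz2pow (m : Multiplicative (ZMod 2)) : Multiplicative.toAdd (m^2) = (0 : ZMod 2) := by
  revert m; decide

lemma lz4 (a b c : Multiplicative (ZMod 4))
    (h : grayZ4 (Multiplicative.toAdd (c*a*b)) = grayZ4 (Multiplicative.toAdd a) + grayZ4 (Multiplicative.toAdd b)) :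
    ((Finset.univ.filter fun i => grayZ4 (Multiplicative.toAdd ((a*b)^2)) i ≠ 0).card : ℤ)
      = (Finset.univ.filter fun i => grayZ4 (Multiplicative.toAdd (a^2)) i ≠ 0).card
        + (Finset.univ.filter fun i => grayZ4 (Multiplicative.toAdd (b^2)) i ≠ 0).card
        - 2 * (Finset.univ.filter fun i => grayZ4 (Multiplicative.toAdd c) i ≠ 0).card := by
  revert h; revert a b c; decide

lemma lq8 (a b c : QuaternionGroup 2) (h1 : ⁅a, b⁆ = 1)
    (h : grayQ8 (c*a*b) = grayQ8 a + grayQ8 b) :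
    ((Finset.univ.filter fun i => grayQ8 ((a*b)^2) i ≠ 0).card : ℤ)
      = (Finset.univ.filter fun i => grayQ8 (a^2) i ≠ 0).card
        + (Finset.univ.filter fun i => grayQ8 (b^2) i ≠ 0).card
        - 2 * (Finset.univ.filter fun i => grayQ8 c i ≠ 0).card := by
  revert h1 h; revert a b c; decide

/-- If x, y ∈ G commute, then wt((xy)²) = wt(x²) + wt(y²) − 2·wt((x : y)). -/
theorem stmt_17 (k1 k2 k3 : ℕ) (x y s : Gq k1 k2 k3)
    (hcomm : ⁅x, y⁆ = 1)
    (hs : grayG (s * x * y) = grayG x + grayG y) :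
    (wtG ((x * y) ^ 2) : ℤ) = (wtG (x ^ 2) : ℤ) + wtG (y ^ 2) - 2 * wtG s := by
  have hs1 : ∀ i, Multiplicative.toAdd (s.1 i * x.1 i * y.1 i)
      = Multiplicative.toAdd (x.1 i) + Multiplicative.toAdd (y.1 i) := fun i => by
    have := congrFun (congrArg Prod.fst hs) i
    simpa [grayG, Prod.fst_mul, Pi.mul_apply] using this
  have hs2 : ∀ j, grayZ4 (Multiplicative.toAdd (s.2.1 j * x.2.1 j * y.2.1 j))
      = grayZ4 (Multiplicative.toAdd (x.2.1 j)) + grayZ4 (Multiplicative.toAdd (y.2.1 j)) := fun j => by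
    have := congrFun (congrArg (fun p => p.2.1) hs) j
    simpa [grayG, Prod.snd_mul, Prod.fst_mul, Pi.mul_apply] using this
  have hs3 : ∀ j, grayQ8 (s.2.2 j * x.2.2 j * y.2.2 j)
      = grayQ8 (x.2.2 j) + grayQ8 (y.2.2 j) := fun j => by
    have := congrFun (congrArg (fun p => p.2.2) hs) j
    simpa [grayG, Prod.snd_mul, Pi.mul_apply] using this
  have hc3 : ∀ j, ⁅x.2.2 j, y.2.2 j⁆ = 1 := fun j => by
    have := congrFun (congrArg (fun p => p.2.2) hcomm) j
    simpa [commutatorElement_def, Prod.snd_mul, Prod.snd_inv, Pi.mul_apply, Pi.inv_apply] using this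
  have e1 : (Finset.univ.filter fun i => (grayG ((x*y)^2)).1 i ≠ 0).card = 0 := by
    refine Finset.card_eq_zero.2 (Finset.filter_eq_empty_iff.2 ?_)
    exact fun i _ => not_not_intro (lz2pow (x.1 i * y.1 i))
  have e1x : (Finset.univ.filter fun i => (grayG (x^2)).1 i ≠ 0).card = 0 := by
    refine Finset.card_eq_zero.2 (Finset.filter_eq_empty_iff.2 ?_)
    exact fun i _ => not_not_intro (lz2pow (x.1 i))
  have e1y : (Finset.univ.filter fun i => (grayG (y^2)).1 i ≠ 0).card = 0 := by
    refine Finset.card_eq_zero.2 (Finset.filter_eq_empty_iff.2 ?_)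
    exact fun i _ => not_not_intro (lz2pow (y.1 i))
  have e1s : (Finset.univ.filter fun i => (grayG s).1 i ≠ 0).card = 0 := by
    refine Finset.card_eq_zero.2 (Finset.filter_eq_empty_iff.2 ?_)
    exact fun i _ => not_not_intro (lz2 (x.1 i) (y.1 i) (s.1 i) (hs1 i))
  have e2 : ∀ j, ((Finset.univ.filter fun b => (grayG ((x*y)^2)).2.1 j b ≠ 0).card : ℤ)
      = (Finset.univ.filter fun b => (grayG (x^2)).2.1 j b ≠ 0).card
        + (Finset.univ.filter fun b => (grayG (y^2)).2.1 j b ≠ 0).card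
        - 2 * (Finset.univ.filter fun b => (grayG s).2.1 j b ≠ 0).card := fun j =>
    lz4 (x.2.1 j) (y.2.1 j) (s.2.1 j) (hs2 j)
  have e3 : ∀ j, ((Finset.univ.filter fun b => (grayG ((x*y)^2)).2.2 j b ≠ 0).card : ℤ)
      = (Finset.univ.filter fun b => (grayG (x^2)).2.2 j b ≠ 0).card
        + (Finset.univ.filter fun b => (grayG (y^2)).2.2 j b ≠ 0).card
        - 2 * (Finset.univ.filter fun b => (grayG s).2.2 j b ≠ 0).card := fun j =>
    lq8 (x.2.2 j) (y.2.2 j) (s.2.2 j) (hc3 j) (hs3 j)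
  simp only [wtG, e1, e1x, e1y, e1s]
  push_cast
  rw [Finset.sum_congr rfl (fun j _ => e2 j), Finset.sum_congr rfl (fun j _ => e3 j)]
  rw [Finset.sum_sub_distrib, Finset.sum_add_distrib,
      Finset.sum_sub_distrib, Finset.sum_add_distrib, ← Finset.mul_sum, ← Finset.mul_sum]
  ring
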